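/- Let G be a compact group and A a translation-invariant closed subalgebra of C(G) containing the constants. Then the set Sp A = {τ ∈ Ĝ : M_τ ⊆ A} of irreducible representation classes whose matrix coefficients lie in A has the property: for all τ, σ ∈ Sp A and every irreducible component ρ of τ ⊗ σ appearing in the decomposition of M_τ · M_σ, ρ ∈ Sp A. Conversely, if a set Sp ⊆ Ĝ contains the trivial representation and for any τ,σ ∈ Sp the space M_τ M_σ lies in the span of {M_ρ : ρ ∈ Sp}, then the closure of Σ_{τ ∈ Sp} M_τ is an invariant algebra. -/

import Mathlib

/-- The span of the matrix coefficients of a (matrix-valued) representation `ρ` of `G`. -/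
noncomputable def MatCoeff {G : Type*} [TopologicalSpace G] (d : ℕ)
    (ρ : G → Matrix (Fin d) (Fin d) ℂ) : Submodule ℂ C(G, ℂ) :=
  Submodule.span ℂ {f : C(G, ℂ) | ∃ i j, ∀ g, f g = ρ g i j}

/-- `ρ` is a continuous finite-dimensional matrix representation. -/
def IsContRep {G : Type*} [TopologicalSpace G] [Group G] (d : ℕ)
    (ρ : G → Matrix (Fin d) (Fin d) ℂ) : Prop :=
  ρ 1 = 1 ∧ (∀ g h : G, ρ (g * h) = ρ g * ρ h) ∧ ∀ i j, Continuous fun g => ρ g i j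

section aux
variable {G : Type*} [Group G] [TopologicalSpace G] [IsTopologicalGroup G]

/-- translation of a matrix coefficient stays in MatCoeff -/
lemma matcoeff_left {d : ℕ} {ρ : G → Matrix (Fin d) (Fin d) ℂ} (hρ : IsContRep d ρ) (g : G)
    {f : C(G, ℂ)} (hf : f ∈ MatCoeff d ρ) :
    f.comp (Homeomorph.mulLeft g : C(G, G)) ∈ MatCoeff d ρ := by
  have hT : ∀ f ∈ {f : C(G, ℂ) | ∃ i j, ∀ x, f x = ρ x i j},
      ContinuousMap.comp f (Homeomorph.mulLeft g : C(G, G)) ∈ MatCoeff d ρ := by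
    rintro f ⟨i, j, hij⟩
    have : ContinuousMap.comp f (Homeomorph.mulLeft g : C(G, G))
        = ∑ k, (ρ g i k) • ⟨fun x => ρ x k j, hρ.2.2 k j⟩ := by
      ext x
      simp only [ContinuousMap.comp_apply, ContinuousMap.sum_apply, ContinuousMap.smul_apply,
        ContinuousMap.coe_mk, smul_eq_mul]
      rw [show ((Homeomorph.mulLeft g) x) = g * x from rfl, hij, hρ.2.1]
      rfl
    rw [this]
    exact Submodule.sum_mem _ fun k _ => Submodule.smul_mem _ _
      (Submodule.subset_span ⟨k, j, fun _ => rfl⟩)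
  -- bundle the translation as a linear map
  let T : C(G, ℂ) →ₗ[ℂ] C(G, ℂ) :=
    (ContinuousMap.compRightAlgHom ℂ ℂ (Homeomorph.mulLeft g : C(G, G))).toLinearMap
  have h : Submodule.span ℂ {f : C(G, ℂ) | ∃ i j, ∀ x, f x = ρ x i j}
      ≤ (MatCoeff d ρ).comap T := Submodule.span_le.mpr (fun f hf => hT f hf)
  exact h hf

lemma matcoeff_right {d : ℕ} {ρ : G → Matrix (Fin d) (Fin d) ℂ} (hρ : IsContRep d ρ) (g : G)
    {f : C(G, ℂ)} (hf : f ∈ MatCoeff d ρ) :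
    f.comp (Homeomorph.mulRight g : C(G, G)) ∈ MatCoeff d ρ := by
  have hT : ∀ f ∈ {f : C(G, ℂ) | ∃ i j, ∀ x, f x = ρ x i j},
      ContinuousMap.comp f (Homeomorph.mulRight g : C(G, G)) ∈ MatCoeff d ρ := by
    rintro f ⟨i, j, hij⟩
    have : ContinuousMap.comp f (Homeomorph.mulRight g : C(G, G))
        = ∑ k, (ρ g k j) • ⟨fun x => ρ x i k, hρ.2.2 i k⟩ := by
      ext x
      simp only [ContinuousMap.comp_apply, ContinuousMap.sum_apply, ContinuousMap.smul_apply,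
        ContinuousMap.coe_mk, smul_eq_mul]
      rw [show ((Homeomorph.mulRight g) x) = x * g from rfl, hij, hρ.2.1]
      simp [Matrix.mul_apply, mul_comm]
    rw [this]
    exact Submodule.sum_mem _ fun k _ => Submodule.smul_mem _ _
      (Submodule.subset_span ⟨i, k, fun _ => rfl⟩)
  let T : C(G, ℂ) →ₗ[ℂ] C(G, ℂ) :=
    (ContinuousMap.compRightAlgHom ℂ ℂ (Homeomorph.mulRight g : C(G, G))).toLinearMap
  have h : Submodule.span ℂ {f : C(G, ℂ) | ∃ i j, ∀ x, f x = ρ x i j}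
      ≤ (MatCoeff d ρ).comap T := Submodule.span_le.mpr (fun f hf => hT f hf)
  exact h hf

end aux

/-- (a) If `A` is a (bi-)invariant closed unital subalgebra of `C(G)` on a compact group `G` and
`τ, σ ∈ Sp A`, then every irreducible representation `ρ` whose matrix coefficients lie in the
span of `M_τ · M_σ` also has `ρ ∈ Sp A`.  (b) Conversely, for a family of continuous
representations whose coefficient spaces contain the constants and whose pairwise products stay
in the algebraic sum, the closure of the sum of the coefficient spaces is an invariant algebra:
closed, unital, multiplicatively closed, and invariant under left and right translations. -/
theorem stmt_12 {G : Type*} [Group G] [TopologicalSpace G] [IsTopologicalGroup G]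
    [CompactSpace G] [T2Space G] :
    (∀ (A : Subalgebra ℂ C(G, ℂ)), IsClosed (A : Set C(G, ℂ)) →
      (∀ g : G, ∀ f ∈ A, f.comp (Homeomorph.mulLeft g : C(G, G)) ∈ A) →
      (∀ g : G, ∀ f ∈ A, f.comp (Homeomorph.mulRight g : C(G, G)) ∈ A) →
      ∀ (dτ dσ dρ : ℕ) (τ : G → Matrix (Fin dτ) (Fin dτ) ℂ)
        (σ : G → Matrix (Fin dσ) (Fin dσ) ℂ) (ρ : G → Matrix (Fin dρ) (Fin dρ) ℂ),
        IsContRep dτ τ → IsContRep dσ σ → IsContRep dρ ρ →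
        (MatCoeff dτ τ : Set C(G, ℂ)) ⊆ A →
        (MatCoeff dσ σ : Set C(G, ℂ)) ⊆ A →
        MatCoeff dρ ρ ≤ Submodule.span ℂ
          {h : C(G, ℂ) | ∃ f ∈ MatCoeff dτ τ, ∃ k ∈ MatCoeff dσ σ, h = f * k} →
        (MatCoeff dρ ρ : Set C(G, ℂ)) ⊆ A) ∧
    (∀ (ι : Type) (d : ι → ℕ) (ρ : ∀ i, G → Matrix (Fin (d i)) (Fin (d i)) ℂ),
      (∀ i, IsContRep (d i) (ρ i)) →
      (1 : C(G, ℂ)) ∈ (⨆ i, MatCoeff (d i) (ρ i) : Submodule ℂ C(G, ℂ)) →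
      (∀ i j, ∀ f ∈ MatCoeff (d i) (ρ i), ∀ k ∈ MatCoeff (d j) (ρ j),
        f * k ∈ (⨆ l, MatCoeff (d l) (ρ l) : Submodule ℂ C(G, ℂ))) →
      let Aset := closure (((⨆ i, MatCoeff (d i) (ρ i) : Submodule ℂ C(G, ℂ)) :
        Set C(G, ℂ)))
      IsClosed Aset ∧ (1 : C(G, ℂ)) ∈ Aset ∧
        (∀ f ∈ Aset, ∀ k ∈ Aset, f * k ∈ Aset) ∧
        (∀ g : G, ∀ f ∈ Aset, f.comp (Homeomorph.mulLeft g : C(G, G)) ∈ Aset) ∧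
        (∀ g : G, ∀ f ∈ Aset, f.comp (Homeomorph.mulRight g : C(G, G)) ∈ Aset)) := by
  constructor
  · -- part (a)
    intro A _ _ _ dτ dσ dρ τ σ ρ _ _ _ hτA hσA hspan
    intro f hf
    have h1 : Submodule.span ℂ
        {h : C(G, ℂ) | ∃ f ∈ MatCoeff dτ τ, ∃ k ∈ MatCoeff dσ σ, h = f * k}
        ≤ Submodule.restrictScalars ℂ A.toSubmodule := by
      rw [Submodule.span_le]
      rintro h ⟨u, hu, v, hv, rfl⟩
      exact A.mul_mem (hτA hu) (hσA hv)
    exact h1 (hspan hf)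
  · -- part (b)
    intro ι d ρ hrep hone hmul
    intro Aset
    set S : Submodule ℂ C(G, ℂ) := ⨆ i, MatCoeff (d i) (ρ i) with hS
    have hmulS : ∀ f ∈ S, ∀ k ∈ S, f * k ∈ S := by
      intro f hf
      refine Submodule.iSup_induction' (motive := fun f _ => ∀ k ∈ S, f * k ∈ S) _ ?_ ?_ ?_ hf
      · intro i f hfi k hk
        refine Submodule.iSup_induction' (motive := fun k _ => f * k ∈ S) _ ?_ ?_ ?_ hk
        · intro j k hkj; exact hmul i j f hfi k hkj
        · simp
        · intro a b _ _ ha hb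
          rw [mul_add]; exact S.add_mem ha hb
      · intro k _; simp
      · intro a b _ _ ha hb k hk
        rw [add_mul]; exact S.add_mem (ha k hk) (hb k hk)
    refine ⟨isClosed_closure, subset_closure hone, ?_, ?_, ?_⟩
    · intro f hf k hk
      exact map_mem_closure₂ continuous_mul hf hk hmulS
    · intro g f hf
      have hmaps : Set.MapsTo (fun f : C(G, ℂ) =>
          f.comp (Homeomorph.mulLeft g : C(G, G))) (S : Set C(G, ℂ)) S := by
        intro f hf
        have : Submodule.map
            (ContinuousMap.compRightAlgHom ℂ ℂ (Homeomorph.mulLeft g : C(G, G))).toLinearMap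
            S ≤ S := by
          rw [hS, Submodule.map_iSup]
          refine iSup_le fun i => le_trans ?_ (le_iSup _ i)
          rintro _ ⟨u, hu, rfl⟩
          exact matcoeff_left (hrep i) g hu
        exact this ⟨f, hf, rfl⟩
      exact map_mem_closure (f := fun f : C(G, ℂ) => f.comp _) (ContinuousMap.continuous_precomp _) hf hmaps
    · intro g f hf
      have hmaps : Set.MapsTo (fun f : C(G, ℂ) =>
          f.comp (Homeomorph.mulRight g : C(G, G))) (S : Set C(G, ℂ)) S := by
        intro f hf
        have : Submodule.map
            (ContinuousMap.compRightAlgHom ℂ ℂ (Homeomorph.mulRight g : C(G, G))).toLinearMap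
            S ≤ S := by
          rw [hS, Submodule.map_iSup]
          refine iSup_le fun i => le_trans ?_ (le_iSup _ i)
          rintro _ ⟨u, hu, rfl⟩
          exact matcoeff_right (hrep i) g hu
        exact this ⟨f, hf, rfl⟩
      exact map_mem_closure (f := fun f : C(G, ℂ) => f.comp _) (ContinuousMap.continuous_precomp _) hf hmaps
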